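/- arXiv:1705.00075 — 2 statements merged into one kernel-verified Lean document; each statement's English description precedes it below -/
import Mathlib

section
/- Let G be a diregular (2,k,+2)-digraph with k ≥ 3, and let u, v have unique common out-neighbour u₂ with N⁺(u)={u₁,u₂}, N⁺(v)={v₁,u₂}, u₁≠v₁. Then v ∈ N^{k−1}(u₁) ∪ O(u) and u ∈ N^{k−1}(v₁) ∪ O(v). Moreover, if v ∈ O(u) then u₂ ∈ O(u₁). -/
open scoped Classical

/-- There is a directed walk of length `n` from `u` to `v` in the digraph with
arc relation `A` (the walk is recorded as its list of `n+1` vertices). -/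
def HasWalkLen {V : Type*} (A : V → V → Prop) (n : ℕ) (u v : V) : Prop :=
  ∃ l : List V, l.head? = some u ∧ l.getLast? = some v ∧ l.Chain' A ∧ l.length = n + 1

/-- The distance from `u` to `v` is at most `n`. -/
def DistLe {V : Type*} (A : V → V → Prop) (n : ℕ) (u v : V) : Prop :=
  ∃ m ≤ n, HasWalkLen A m u v

/-- The distance from `u` to `v` is exactly `n`. -/
def DistEq {V : Type*} (A : V → V → Prop) (n : ℕ) (u v : V) : Prop :=
  HasWalkLen A n u v ∧ ∀ m < n, ¬ HasWalkLen A m u v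

/-- A digraph is `k`-geodetic: between any ordered pair of vertices there is at
most one directed path of length at most `k`. -/
def Geodetic {V : Type*} (A : V → V → Prop) (k : ℕ) : Prop :=
  ∀ u v : V, ∀ l₁ l₂ : List V,
    (l₁.head? = some u ∧ l₁.getLast? = some v ∧ l₁.Chain' A ∧ l₁.length ≤ k + 1) →
    (l₂.head? = some u ∧ l₂.getLast? = some v ∧ l₂.Chain' A ∧ l₂.length ≤ k + 1) →
    l₁ = l₂

/-- Out-neighbourhood. -/
def Nplus {V : Type*} (A : V → V → Prop) (u : V) : Set V := {v | A u v}

/-- Out-degree. -/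
noncomputable def outDeg {V : Type*} (A : V → V → Prop) (u : V) : ℕ := {v | A u v}.ncard

/-- In-degree. -/
noncomputable def inDeg {V : Type*} (A : V → V → Prop) (u : V) : ℕ := {v | A v u}.ncard

/-- `T_k(u)`: the set of vertices at distance at most `k` from `u`. -/
def Tset {V : Type*} (A : V → V → Prop) (k : ℕ) (u : V) : Set V := {v | DistLe A k u v}

/-- `O(u)`: the outliers of `u`, i.e. vertices at distance at least `k+1` from `u`. -/
def Outliers {V : Type*} (A : V → V → Prop) (k : ℕ) (u : V) : Set V := {v | ¬ DistLe A k u v}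

section
variable {V : Type*} {A : V → V → Prop}

lemma walk_nil (c : V) : HasWalkLen A 0 c c := ⟨[c], rfl, rfl, List.isChain_singleton c, rfl⟩

lemma walk_zero {u v : V} (h : HasWalkLen A 0 u v) : u = v := by
  obtain ⟨l, h1, h2, _, h4⟩ := h
  obtain ⟨a, rfl⟩ := List.length_eq_one_iff.mp h4
  simp only [List.head?_cons, List.getLast?_singleton, Option.some.injEq] at h1 h2
  rw [← h1, ← h2]

lemma walk_one {u v : V} (h : A u v) : HasWalkLen A 1 u v :=
  ⟨[u, v], rfl, rfl, List.isChain_pair.mpr h, rfl⟩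

lemma walk_cons {n : ℕ} {u w v : V} (ha : A u w) (h : HasWalkLen A n w v) :
    HasWalkLen A (n + 1) u v := by
  obtain ⟨l, h1, h2, h3, h4⟩ := h
  refine ⟨u :: l, rfl, ?_, ?_, by simp [h4]⟩
  · obtain ⟨b, t, rfl⟩ : ∃ b t, l = b :: t := by
      cases l with
      | nil => simp at h4
      | cons b t => exact ⟨b, t, rfl⟩
    rwa [List.getLast?_cons_cons]
  · exact List.isChain_cons.mpr ⟨fun y hy => by rw [h1] at hy; cases hy; exact ha, h3⟩

lemma walk_uncons {n : ℕ} {u v : V} (h : HasWalkLen A (n + 1) u v) :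
    ∃ w, A u w ∧ HasWalkLen A n w v := by
  obtain ⟨l, h1, h2, h3, h4⟩ := h
  match l with
  | [] => simp at h4
  | [a] => simp at h4
  | a :: b :: t =>
    simp only [List.head?_cons, Option.some.injEq] at h1
    subst h1
    rw [List.getLast?_cons_cons] at h2
    replace h3 := List.isChain_cons_cons.mp h3
    exact ⟨b, h3.1, b :: t, rfl, h2, h3.2, by simpa using h4⟩

lemma walk_snoc {n : ℕ} {u v w : V} (h : HasWalkLen A n u v) (ha : A v w) :
    HasWalkLen A (n + 1) u w := by
  induction n generalizing u with
  | zero => cases walk_zero h; exact walk_one ha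
  | succ n ih =>
    obtain ⟨x, hx, hw⟩ := walk_uncons h
    exact walk_cons hx (ih hw)

lemma walk_unsnoc {n : ℕ} {u v : V} (h : HasWalkLen A (n + 1) u v) :
    ∃ p, HasWalkLen A n u p ∧ A p v := by
  induction n generalizing u with
  | zero =>
    obtain ⟨w, hw, h0⟩ := walk_uncons h
    cases walk_zero h0
    exact ⟨u, walk_nil u, hw⟩
  | succ n ih =>
    obtain ⟨x, hx, hw⟩ := walk_uncons h
    obtain ⟨p, hp, hpv⟩ := ih hw
    exact ⟨p, walk_cons hx hp, hpv⟩

lemma geo_len {k m m' : ℕ} {u v : V} (hg : Geodetic A k) (hm : m ≤ k) (hm' : m' ≤ k)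
    (h : HasWalkLen A m u v) (h' : HasWalkLen A m' u v) : m = m' := by
  obtain ⟨l, h1, h2, h3, h4⟩ := h
  obtain ⟨l', h1', h2', h3', h4'⟩ := h'
  have := hg u v l l' ⟨h1, h2, h3, by omega⟩ ⟨h1', h2', h3', by omega⟩
  subst this
  omega

lemma no_short_cycle {k m : ℕ} {c : V} (hg : Geodetic A k) (hm : m ≤ k) (h1 : 1 ≤ m)
    (h : HasWalkLen A m c c) : False := by
  have := geo_len hg hm (Nat.zero_le k) h (walk_nil c)
  omega

/-- If `u ≠ v`, `A u c`, `A v c`, then any walk `u → v` of length `≤ k` has length `k`. -/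
lemma claim_main {k : ℕ} (hg : Geodetic A k) {u v c : V}
    (huv : u ≠ v) (huc : A u c) (hvc : A v c) {m : ℕ} (hm : m ≤ k)
    (h : HasWalkLen A m u v) : m = k := by
  by_contra hne
  rcases Nat.eq_zero_or_pos m with h0 | h1
  · subst h0; exact huv (walk_zero h)
  · have w2 : HasWalkLen A (m + 1) u c := walk_snoc h hvc
    have w1 : HasWalkLen A 1 u c := walk_one huc
    have := geo_len hg (by omega) (by omega) w2 w1
    omega

end


section
variable {V : Type*} {A : V → V → Prop}

/-- One half of the dichotomy, stated generically. -/
lemma half_dichotomy {k : ℕ} (hk : 1 ≤ k) (hg : Geodetic A k) {u v u₁ c : V}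
    (huv : u ≠ v) (hu : Nplus A u = {u₁, c}) (hvc : A v c) :
    DistEq A (k - 1) u₁ v ∨ v ∈ Outliers A k u := by
  have huc : A u c := by
    have : c ∈ Nplus A u := by rw [hu]; exact Or.inr rfl
    exact this
  have hu1 : A u u₁ := by
    have : u₁ ∈ Nplus A u := by rw [hu]; exact Or.inl rfl
    exact this
  by_cases hd : DistLe A k u v
  · left
    obtain ⟨m, hm, hw⟩ := hd
    have hmk : m = k := claim_main hg huv huc hvc hm hw
    subst hmk
    have hk' : m = (m - 1) + 1 := by omega
    rw [hk'] at hw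
    obtain ⟨w, haw, hw'⟩ := walk_uncons hw
    have hwmem : w ∈ Nplus A u := haw
    rw [hu] at hwmem
    rcases hwmem with rfl | rfl
    · -- w = u₁
      refine ⟨hw', fun m' hm' hwm' => ?_⟩
      have : HasWalkLen A (m' + 1) u v := walk_cons hu1 hwm'
      have := claim_main hg huv huc hvc (by omega) this
      omega
    · -- w = c : closed walk at c of length m, contradiction
      exfalso
      have : HasWalkLen A ((m - 1) + 1) w w := walk_snoc hw' hvc
      exact no_short_cycle hg (by omega) (by omega) this
  · exact Or.inr hd

end

/-- In a diregular `(2,k,+2)`-digraph with `k ≥ 3` and `u, v` having unique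
common out-neighbour `u₂`: `v ∈ N^{k−1}(u₁) ∪ O(u)`, `u ∈ N^{k−1}(v₁) ∪ O(v)`,
and if `v ∈ O(u)` then `u₂ ∈ O(u₁)`. -/
theorem stmt_13 {V : Type*} [Fintype V] (A : V → V → Prop) (k : ℕ) (hk : 3 ≤ k)
    (hgeo : Geodetic A k)
    (hdeg : ∀ w, outDeg A w = 2 ∧ inDeg A w = 2)
    (hcard : Fintype.card V = 2 ^ (k + 1) + 1)
    (u v u₁ u₂ v₁ : V) (huv : u ≠ v)
    (h12 : u₁ ≠ u₂) (hv2 : v₁ ≠ u₂) (h11 : u₁ ≠ v₁)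
    (hu : Nplus A u = {u₁, u₂}) (hv : Nplus A v = {v₁, u₂}) :
    (DistEq A (k - 1) u₁ v ∨ v ∈ Outliers A k u) ∧
    (DistEq A (k - 1) v₁ u ∨ u ∈ Outliers A k v) ∧
    (v ∈ Outliers A k u → u₂ ∈ Outliers A k u₁) := by
  obtain ⟨n, rfl⟩ : ∃ n, k = n + 1 := ⟨k - 1, by omega⟩
  have hk1 : 1 ≤ n + 1 := by omega
  have hu2 : A u u₂ := by
    have : u₂ ∈ Nplus A u := by rw [hu]; exact Or.inr rfl
    exact this
  have hv2' : A v u₂ := by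
    have : u₂ ∈ Nplus A v := by rw [hv]; exact Or.inr rfl
    exact this
  have hu1 : A u u₁ := by
    have : u₁ ∈ Nplus A u := by rw [hu]; exact Or.inl rfl
    exact this
  refine ⟨half_dichotomy hk1 hgeo huv hu hv2',
          half_dichotomy hk1 hgeo huv.symm hv hu2, ?_⟩
  intro hO hd
  obtain ⟨m, hm, hw⟩ := hd
  -- first, m = n + 1
  have hmk : m = n + 1 := by
    by_contra hne
    rcases Nat.eq_zero_or_pos m with h0 | h1
    · subst h0; exact h12 (walk_zero hw)
    · have w2 : HasWalkLen A (m + 1) u u₂ := walk_cons hu1 hw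
      have w1 : HasWalkLen A 1 u u₂ := walk_one hu2
      have := geo_len hgeo (by omega) (by omega) w2 w1
      omega
  subst hmk
  obtain ⟨p, hp, hpu₂⟩ := walk_unsnoc hw
  -- in-neighbours of u₂ are exactly {u, v}
  have hin : ({u, v} : Set V) = {x | A x u₂} := by
    apply Set.eq_of_subset_of_ncard_le
    · intro x hx
      rcases hx with rfl | hx
      · exact hu2
      · cases hx; exact hv2'
    · have h2 : ({x | A x u₂} : Set V).ncard = 2 := (hdeg u₂).2
      rw [h2, Set.ncard_pair huv]
    · exact Set.toFinite _
  have hpmem : p ∈ ({u, v} : Set V) := by rw [hin]; exact hpu₂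
  rcases hpmem with rfl | hpv
  · -- p = u : closed walk at u of length n + 1
    exact no_short_cycle hgeo (le_refl _) (by omega) (walk_cons hu1 hp)
  · -- p = v : walk of length n + 1 from u to v, contradicting v ∈ Outliers
    cases hpv
    exact hO ⟨n + 1, le_refl _, walk_cons hu1 hp⟩
end

section
/- Let G be a diregular (2,k,+2)-digraph (k ≥ 3) with u, v having unique common out-neighbour u₂ as above. Then T_{k−3}(v₁) ∩ N^{k−1}(u₁) = ∅ and T_{k−3}(u₁) ∩ N^{k−1}(v₁) = ∅. -/
open scoped Classical

section walks
variable {V : Type*} {A : V → V → Prop}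

lemma hwl_zero {u v : V} : HasWalkLen A 0 u v ↔ u = v := by
  constructor
  · rintro ⟨l, h1, h2, h3, h4⟩
    obtain ⟨a, rfl⟩ := List.length_eq_one_iff.mp h4
    simp only [List.head?_cons, List.getLast?_singleton, Option.some.injEq] at h1 h2
    exact h1.symm.trans h2
  · rintro rfl
    exact ⟨[u], by simp, by simp, List.isChain_singleton u, by simp⟩

lemma hwl_succ {n : ℕ} {u v : V} :
    HasWalkLen A (n + 1) u v ↔ ∃ a, A u a ∧ HasWalkLen A n a v := by
  constructor
  · rintro ⟨l, h1, h2, h3, h4⟩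
    match l, h4 with
    | x :: y :: t, h4 =>
      simp only [List.head?_cons, Option.some.injEq] at h1
      subst h1
      rw [List.Chain', List.isChain_cons] at h3
      refine ⟨y, h3.1 y rfl, y :: t, rfl, ?_, h3.2, by simpa using h4⟩
      rw [← h2, List.getLast?_cons_cons]
  · rintro ⟨a, hua, l, h1, h2, h3, h4⟩
    refine ⟨u :: l, rfl, ?_, ?_, by simp [h4]⟩
    · have hl : l ≠ [] := by rintro rfl; simp at h1
      obtain ⟨b, t, rfl⟩ := List.exists_cons_of_ne_nil hl
      rw [List.getLast?_cons_cons]; exact h2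
    · rw [List.Chain', List.isChain_cons]
      exact ⟨fun y hy => by rw [h1] at hy; cases hy; exact hua, h3⟩

lemma hwl_succ' {n : ℕ} {u v : V} :
    HasWalkLen A (n + 1) u v ↔ ∃ b, HasWalkLen A n u b ∧ A b v := by
  induction n generalizing u with
  | zero =>
    rw [hwl_succ]
    constructor
    · rintro ⟨a, h, h0⟩; exact ⟨u, hwl_zero.mpr rfl, by rwa [hwl_zero.mp h0] at h⟩
    · rintro ⟨b, h0, h⟩; obtain rfl := hwl_zero.mp h0; exact ⟨v, h, hwl_zero.mpr rfl⟩
  | succ n ih =>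
    rw [hwl_succ]
    constructor
    · rintro ⟨a, hua, h⟩
      obtain ⟨b, hb, hbv⟩ := ih.mp h
      exact ⟨b, hwl_succ.mpr ⟨a, hua, hb⟩, hbv⟩
    · rintro ⟨b, h, hbv⟩
      obtain ⟨a, hua, hb⟩ := hwl_succ.mp h
      exact ⟨a, hua, ih.mpr ⟨b, hb, hbv⟩⟩

lemma hwl_concat {n : ℕ} {a b c : V} (h : HasWalkLen A n a b) (hbc : A b c) :
    HasWalkLen A (n + 1) a c := hwl_succ'.mpr ⟨b, h, hbc⟩

lemma hwl_trans {m n : ℕ} {a b c : V} (h1 : HasWalkLen A m a b) (h2 : HasWalkLen A n b c) :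
    HasWalkLen A (m + n) a c := by
  induction n generalizing c with
  | zero => rwa [hwl_zero.mp h2] at h1
  | succ n ih =>
    obtain ⟨x, hx, hxc⟩ := hwl_succ'.mp h2
    exact hwl_concat (ih hx) hxc

end walks

section geo
variable {V : Type*} {A : V → V → Prop} {k : ℕ}

lemma geo_len_s16 (hgeo : Geodetic A k) {m n : ℕ} {u x : V}
    (h1 : HasWalkLen A m u x) (h2 : HasWalkLen A n u x) (hm : m ≤ k) (hn : n ≤ k) : m = n := by
  obtain ⟨l₁, a1, b1, c1, d1⟩ := h1
  obtain ⟨l₂, a2, b2, c2, d2⟩ := h2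
  have := hgeo u x l₁ l₂ ⟨a1, b1, c1, by omega⟩ ⟨a2, b2, c2, by omega⟩
  have : l₁.length = l₂.length := by rw [this]
  omega

lemma geo_snd (hgeo : Geodetic A k) {m n : ℕ} {u a b x : V}
    (hua : A u a) (hub : A u b) (h1 : HasWalkLen A m a x) (h2 : HasWalkLen A n b x)
    (hm : m + 1 ≤ k) (hn : n + 1 ≤ k) : a = b := by
  obtain ⟨l₁, p1, q1, r1, s1⟩ := h1
  obtain ⟨l₂, p2, q2, r2, s2⟩ := h2
  have n1 : l₁ ≠ [] := by rintro rfl; simp at s1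
  have n2 : l₂ ≠ [] := by rintro rfl; simp at s2
  have c1 : (u :: l₁).Chain' A := List.isChain_cons.mpr
    ⟨fun y hy => by rw [p1] at hy; cases hy; exact hua, r1⟩
  have c2 : (u :: l₂).Chain' A := List.isChain_cons.mpr
    ⟨fun y hy => by rw [p2] at hy; cases hy; exact hub, r2⟩
  have g1 : (u :: l₁).getLast? = some x := by
    obtain ⟨c, t, rfl⟩ := List.exists_cons_of_ne_nil n1
    rw [List.getLast?_cons_cons]; exact q1
  have g2 : (u :: l₂).getLast? = some x := by
    obtain ⟨c, t, rfl⟩ := List.exists_cons_of_ne_nil n2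
    rw [List.getLast?_cons_cons]; exact q2
  have heq := hgeo u x (u :: l₁) (u :: l₂) ⟨rfl, g1, c1, by simp; omega⟩
    ⟨rfl, g2, c2, by simp; omega⟩
  have : l₁.head? = l₂.head? := by rw [List.cons.injEq] at heq; rw [heq.2]
  rw [p1, p2] at this
  exact Option.some_injective _ this

lemma geo_penult (hgeo : Geodetic A k) {m n : ℕ} {u x x' y : V}
    (h1 : HasWalkLen A m u x) (hxy : A x y) (h2 : HasWalkLen A n u x') (hx'y : A x' y)
    (hm : m + 1 ≤ k) (hn : n + 1 ≤ k) : x = x' := by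
  obtain ⟨l₁, p1, q1, r1, s1⟩ := h1
  obtain ⟨l₂, p2, q2, r2, s2⟩ := h2
  have n1 : l₁ ≠ [] := by rintro rfl; simp at s1
  have n2 : l₂ ≠ [] := by rintro rfl; simp at s2
  have c1 : (l₁ ++ [y]).Chain' A := List.isChain_append.mpr
    ⟨r1, List.isChain_singleton y, fun a ha b hb => by
      rw [q1] at ha; cases ha; simp at hb; subst hb; exact hxy⟩
  have c2 : (l₂ ++ [y]).Chain' A := List.isChain_append.mpr
    ⟨r2, List.isChain_singleton y, fun a ha b hb => by
      rw [q2] at ha; cases ha; simp at hb; subst hb; exact hx'y⟩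
  have heq := hgeo u y (l₁ ++ [y]) (l₂ ++ [y])
    ⟨by rw [List.head?_append_of_ne_nil _ n1]; exact p1, by simp, c1, by simp; omega⟩
    ⟨by rw [List.head?_append_of_ne_nil _ n2]; exact p2, by simp, c2, by simp; omega⟩
  have : l₁ = l₂ := List.append_cancel_right heq
  subst this
  rw [q1] at q2
  exact Option.some_injective _ q2

end geo

section count
variable {V : Type*} [Fintype V] {A : V → V → Prop} {k : ℕ}

lemma two_pow_sum (N : ℕ) : ∑ i ∈ Finset.range N, 2 ^ i = 2 ^ N - 1 := by
  induction N with
  | zero => simp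
  | succ n ih =>
    rw [Finset.sum_range_succ, ih]
    have := Nat.one_le_two_pow (n := n)
    rw [pow_succ]; omega

lemma card_outnbr (hdeg : ∀ w : V, outDeg A w = 2) (x : V) :
    (Finset.univ.filter (fun y => A x y)).card = 2 := by
  have h := hdeg x
  rw [outDeg, Set.ncard_eq_toFinset_card', Set.toFinset_setOf] at h
  exact h

lemma card_level (hgeo : Geodetic A k) (hdeg : ∀ w : V, outDeg A w = 2) :
    ∀ n, n ≤ k → ∀ w : V, (Finset.univ.filter (fun x => HasWalkLen A n w x)).card = 2 ^ n := by
  intro n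
  induction n with
  | zero =>
    intro _ w
    have : (Finset.univ.filter (fun x => HasWalkLen A 0 w x)) = {w} := by
      ext x; simp [hwl_zero, eq_comm]
    rw [this]; simp
  | succ n ih =>
    intro hn w
    have hstep : (Finset.univ.filter (fun x => HasWalkLen A (n + 1) w x)) =
        (Finset.univ.filter (fun x => HasWalkLen A n w x)).biUnion
          (fun b => Finset.univ.filter (fun y => A b y)) := by
      ext y
      simp only [Finset.mem_filter, Finset.mem_biUnion, Finset.mem_univ, true_and]
      rw [hwl_succ']
    rw [hstep, Finset.card_biUnion]
    · rw [Finset.sum_congr rfl (fun x _ => card_outnbr hdeg x), Finset.sum_const,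
        ih (by omega) w, smul_eq_mul, pow_succ]
    · intro x hx y hy hxy
      simp only [Finset.mem_coe, Finset.mem_filter, Finset.mem_univ, true_and] at hx hy
      rw [Function.onFun, Finset.disjoint_left]
      intro z hz1 hz2
      simp only [Finset.mem_filter, Finset.mem_univ, true_and] at hz1 hz2
      exact hxy (geo_penult hgeo hx hz1 hy hz2 (by omega) (by omega))

lemma ncard_level (hgeo : Geodetic A k) (hdeg : ∀ w : V, outDeg A w = 2)
    {n : ℕ} (hn : n ≤ k) (w : V) : {x : V | HasWalkLen A n w x}.ncard = 2 ^ n := by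
  rw [Set.ncard_eq_toFinset_card', Set.toFinset_setOf]
  exact card_level hgeo hdeg n hn w

lemma card_T (hgeo : Geodetic A k) (hdeg : ∀ w : V, outDeg A w = 2) (w : V) :
    (Finset.univ.filter (fun x => DistLe A k w x)).card = 2 ^ (k + 1) - 1 := by
  have hstep : (Finset.univ.filter (fun x => DistLe A k w x)) =
      (Finset.range (k + 1)).biUnion
        (fun n => Finset.univ.filter (fun x => HasWalkLen A n w x)) := by
    ext y
    rw [Finset.mem_filter]
    simp only [Finset.mem_filter, Finset.mem_biUnion, Finset.mem_univ, true_and,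
      Finset.mem_range, Nat.lt_succ_iff, DistLe]
  rw [hstep, Finset.card_biUnion]
  · rw [Finset.sum_congr rfl (fun n hn => card_level hgeo hdeg n (by
      simpa [Nat.lt_succ_iff] using hn) w)]
    exact two_pow_sum (k + 1)
  · intro m hm n hn hmn
    simp only [Finset.mem_coe, Finset.mem_range, Nat.lt_succ_iff] at hm hn
    rw [Function.onFun, Finset.disjoint_left]
    intro z hz1 hz2
    simp only [Finset.mem_filter, Finset.mem_univ, true_and] at hz1 hz2
    exact hmn (geo_len_s16 hgeo hz1 hz2 hm hn)

lemma ncard_O (hgeo : Geodetic A k) (hdeg : ∀ w : V, outDeg A w = 2)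
    (hcard : Fintype.card V = 2 ^ (k + 1) + 1) (w : V) :
    {y : V | ¬ DistLe A k w y}.ncard = 2 := by
  have h1 : {y : V | DistLe A k w y}.ncard = 2 ^ (k + 1) - 1 := by
    rw [Set.ncard_eq_toFinset_card', Set.toFinset_setOf]
    exact card_T hgeo hdeg w
  have h2 : {y : V | DistLe A k w y}.ncard + {y : V | DistLe A k w y}ᶜ.ncard = Nat.card V :=
    Set.ncard_add_ncard_compl _
  have h3 : {y : V | ¬ DistLe A k w y} = {y : V | DistLe A k w y}ᶜ := rfl
  rw [h3]
  rw [Nat.card_eq_fintype_card, hcard, h1] at h2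
  have := Nat.one_le_two_pow (n := k + 1)
  omega

end count

section main
variable {V : Type*} [Fintype V] {A : V → V → Prop} {k : ℕ}

lemma out_lemma (hk : 3 ≤ k) (hgeo : Geodetic A k) (hdeg : ∀ w : V, outDeg A w = 2)
    (hcard : Fintype.card V = 2 ^ (k + 1) + 1)
    {u v u₁ u₂ v₁ : V} (huv : u ≠ v) (h12 : u₁ ≠ u₂) (hv2 : v₁ ≠ u₂) (h11 : u₁ ≠ v₁)
    (hu : Nplus A u = {u₁, u₂}) (hv : Nplus A v = {v₁, u₂}) :
    ¬ DistLe A k u v₁ := by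
  have hAuu₁ : A u u₁ := by
    have : u₁ ∈ Nplus A u := by rw [hu]; exact Set.mem_insert _ _
    exact this
  have hAuu₂ : A u u₂ := by
    have : u₂ ∈ Nplus A u := by rw [hu]; exact Set.mem_insert_iff.mpr (Or.inr rfl)
    exact this
  have hAvv₁ : A v v₁ := by
    have : v₁ ∈ Nplus A v := by rw [hv]; exact Set.mem_insert _ _
    exact this
  have hAvu₂ : A v u₂ := by
    have : u₂ ∈ Nplus A v := by rw [hv]; exact Set.mem_insert_iff.mpr (Or.inr rfl)
    exact this
  have hdecu : ∀ {s : ℕ} {y : V}, HasWalkLen A (s + 1) u y →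
      (HasWalkLen A s u₁ y ∨ HasWalkLen A s u₂ y) := by
    intro s y h
    obtain ⟨a, hua, ha⟩ := hwl_succ.mp h
    have : a ∈ Nplus A u := hua
    rw [hu] at this
    rcases this with rfl | rfl
    · exact Or.inl ha
    · exact Or.inr ha
  rintro ⟨m, hm, hwalk⟩
  rcases Nat.eq_zero_or_pos m with rfl | hmpos
  · obtain rfl := hwl_zero.mp hwalk
    have w2 : HasWalkLen A 2 v u₂ :=
      hwl_concat (hwl_concat (hwl_zero.mpr rfl) hAvv₁) hAuu₂
    have w1 : HasWalkLen A 1 v u₂ := hwl_concat (hwl_zero.mpr rfl) hAvu₂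
    have := geo_len_s16 hgeo w2 w1 (by omega) (by omega)
    omega
  obtain ⟨t, rfl⟩ : ∃ t, m = t + 1 := ⟨m - 1, by omega⟩
  rcases hdecu hwalk with hwa | hwa
  swap
  · have := geo_snd hgeo hAvu₂ hAvv₁ hwa (hwl_zero.mpr rfl) (by omega) (by omega)
    exact hv2 this.symm
  have ht0 : t ≠ 0 := fun h => h11 (hwl_zero.mp (h ▸ hwa))
  -- every vertex at distance k - t from v₁ is u or an outlier of u
  have hclaim : {y : V | HasWalkLen A (k - t) v₁ y} ⊆ {u} ∪ {y : V | ¬ DistLe A k u y} := by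
    intro y hy
    simp only [Set.mem_setOf_eq] at hy
    by_cases hyu : y = u
    · exact Or.inl hyu
    refine Or.inr ?_
    rintro ⟨m', hm', hw'⟩
    rcases Nat.eq_zero_or_pos m' with rfl | hm'pos
    · exact hyu (hwl_zero.mp hw').symm
    obtain ⟨s, rfl⟩ : ∃ s, m' = s + 1 := ⟨m' - 1, by omega⟩
    rcases hdecu hw' with hw'' | hw''
    · have hk' : HasWalkLen A (t + (k - t)) u₁ y := hwl_trans hwa hy
      have : t + (k - t) = k := by omega
      rw [this] at hk'
      have := geo_len_s16 hgeo hk' hw'' le_rfl (by omega)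
      omega
    · have := geo_snd hgeo hAvu₂ hAvv₁ hw'' hy (by omega) (by omega)
      exact hv2 this.symm
  have hOcard : {y : V | ¬ DistLe A k u y}.ncard = 2 := ncard_O hgeo hdeg hcard u
  have hlev : {y : V | HasWalkLen A (k - t) v₁ y}.ncard = 2 ^ (k - t) :=
    ncard_level hgeo hdeg (by omega) v₁
  have hle : 2 ^ (k - t) ≤ 3 := by
    rw [← hlev]
    calc {y : V | HasWalkLen A (k - t) v₁ y}.ncard
        ≤ ({u} ∪ {y : V | ¬ DistLe A k u y} : Set V).ncard :=
          Set.ncard_le_ncard hclaim (Set.toFinite _)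
      _ ≤ ({u} : Set V).ncard + {y : V | ¬ DistLe A k u y}.ncard := Set.ncard_union_le _ _
      _ ≤ 3 := by rw [hOcard, Set.ncard_singleton]
  rcases Nat.lt_or_ge t (k - 1) with htlt | htge
  · -- t ≤ k - 2, so k - t ≥ 2 and 2^(k-t) ≥ 4
    have h4 : (4 : ℕ) ≤ 2 ^ (k - t) := by
      calc (4 : ℕ) = 2 ^ 2 := by norm_num
        _ ≤ 2 ^ (k - t) := Nat.pow_le_pow_right (by norm_num) (by omega)
    omega
  · -- t = k - 1
    have htk : t = k - 1 := by omega
    have hkt1 : k - t = 1 := by omega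
    obtain ⟨w₁, w₂, hw12, hNv₁⟩ := Set.ncard_eq_two.mp (hdeg v₁)
    have hAw₁ : A v₁ w₁ := by
      have : w₁ ∈ {y : V | A v₁ y} := by rw [hNv₁]; exact Set.mem_insert _ _
      exact this
    have hAw₂ : A v₁ w₂ := by
      have : w₂ ∈ {y : V | A v₁ y} := by rw [hNv₁]; exact Set.mem_insert_iff.mpr (Or.inr rfl)
      exact this
    have hnu : ∀ w' : V, A v₁ w' → w' ≠ u := by
      rintro w' hA rfl
      have w3 : HasWalkLen A 3 v u₂ :=
        hwl_concat (hwl_concat (hwl_concat (hwl_zero.mpr rfl) hAvv₁) hA) hAuu₂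
      have w1 : HasWalkLen A 1 v u₂ := hwl_concat (hwl_zero.mpr rfl) hAvu₂
      have := geo_len_s16 hgeo w3 w1 (by omega) (by omega)
      omega
    have hmemO : ∀ w' : V, A v₁ w' → w' ∈ {y : V | ¬ DistLe A k u y} := by
      intro w' hA
      have hw' : HasWalkLen A (k - t) v₁ w' := by
        rw [hkt1]; exact hwl_concat (hwl_zero.mpr rfl) hA
      rcases hclaim hw' with h | h
      · exact absurd h (hnu w' hA)
      · exact h
    have hsub : ({w₁, w₂} : Set V) ⊆ {y : V | ¬ DistLe A k u y} := by
      rintro x (rfl | rfl)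
      · exact hmemO _ hAw₁
      · exact hmemO _ hAw₂
    have hOeq : ({w₁, w₂} : Set V) = {y : V | ¬ DistLe A k u y} :=
      Set.eq_of_subset_of_ncard_le hsub (by rw [hOcard, Set.ncard_pair hw12]) (Set.toFinite _)
    have hvT : DistLe A k u v := by
      by_contra hcon
      have : v ∈ ({w₁, w₂} : Set V) := by rw [hOeq]; exact hcon
      rcases this with rfl | rfl
      · have w2' : HasWalkLen A 2 v v := hwl_concat (hwl_concat (hwl_zero.mpr rfl) hAvv₁) hAw₁
        have := geo_len_s16 hgeo w2' (hwl_zero.mpr rfl) (by omega) (by omega)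
        omega
      · have w2' : HasWalkLen A 2 v v := hwl_concat (hwl_concat (hwl_zero.mpr rfl) hAvv₁) hAw₂
        have := geo_len_s16 hgeo w2' (hwl_zero.mpr rfl) (by omega) (by omega)
        omega
    obtain ⟨m'', hm'', hwv⟩ := hvT
    rcases Nat.eq_zero_or_pos m'' with rfl | hpos
    · exact huv (hwl_zero.mp hwv)
    obtain ⟨s, rfl⟩ : ∃ s, m'' = s + 1 := ⟨m'' - 1, by omega⟩
    rcases hdecu hwv with hw'' | hw''
    · have hb : HasWalkLen A (s + 1) u₁ v₁ := hwl_concat hw'' hAvv₁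
      have hst := geo_len_s16 hgeo hb hwa (by omega) (by omega)
      have hlong : HasWalkLen A (s + 1 + 1) u u₂ := hwl_concat hwv hAvu₂
      have hshort : HasWalkLen A 1 u u₂ := hwl_concat (hwl_zero.mpr rfl) hAuu₂
      have := geo_len_s16 hgeo hlong hshort (by omega) (by omega)
      omega
    · have hc : HasWalkLen A (s + 1) u₂ u₂ := hwl_concat hw'' hAvu₂
      have := geo_len_s16 hgeo hc (hwl_zero.mpr rfl) (by omega) (by omega)
      omega

end main

section key
variable {V : Type*} [Fintype V] {A : V → V → Prop} {k : ℕ}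

lemma key_lemma (hk : 3 ≤ k) (hgeo : Geodetic A k) (hdeg : ∀ w : V, outDeg A w = 2)
    (hcard : Fintype.card V = 2 ^ (k + 1) + 1)
    {u v u₁ u₂ v₁ : V} (huv : u ≠ v) (h12 : u₁ ≠ u₂) (hv2 : v₁ ≠ u₂) (h11 : u₁ ≠ v₁)
    (hu : Nplus A u = {u₁, u₂}) (hv : Nplus A v = {v₁, u₂}) :
    Tset A (k - 3) v₁ ∩ {w | DistEq A (k - 1) u₁ w} = ∅ := by
  have hAuu₁ : A u u₁ := by
    have : u₁ ∈ Nplus A u := by rw [hu]; exact Set.mem_insert _ _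
    exact this
  have hAuu₂ : A u u₂ := by
    have : u₂ ∈ Nplus A u := by rw [hu]; exact Set.mem_insert_iff.mpr (Or.inr rfl)
    exact this
  have hAvv₁ : A v v₁ := by
    have : v₁ ∈ Nplus A v := by rw [hv]; exact Set.mem_insert _ _
    exact this
  have hAvu₂ : A v u₂ := by
    have : u₂ ∈ Nplus A v := by rw [hv]; exact Set.mem_insert_iff.mpr (Or.inr rfl)
    exact this
  rw [Set.eq_empty_iff_forall_notMem]
  rintro z ⟨hT, hE⟩
  obtain ⟨d, hd, hdz⟩ : ∃ d ≤ k - 3, HasWalkLen A d v₁ z := hT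
  have hz : HasWalkLen A (k - 1) u₁ z := hE.1
  obtain ⟨z₁, z₂, hz12, hNz⟩ := Set.ncard_eq_two.mp (hdeg z)
  have hAz₁ : A z z₁ := by
    have : z₁ ∈ {y : V | A z y} := by rw [hNz]; exact Set.mem_insert _ _
    exact this
  have hAz₂ : A z z₂ := by
    have : z₂ ∈ {y : V | A z y} := by rw [hNz]; exact Set.mem_insert_iff.mpr (Or.inr rfl)
    exact this
  -- every out-neighbour of z is an outlier of u
  have hO : ∀ w' : V, A z w' → ¬ DistLe A k u w' := by
    rintro w' hzw ⟨m, hm, hw⟩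
    have hvz : HasWalkLen A (1 + d) v z := hwl_trans (hwl_concat (hwl_zero.mpr rfl) hAvv₁) hdz
    rcases Nat.eq_zero_or_pos m with rfl | hmpos
    · obtain rfl := (hwl_zero.mp hw).symm
      have wlong : HasWalkLen A (1 + d + 1 + 1) v u₂ :=
        hwl_concat (hwl_concat hvz hzw) hAuu₂
      have wshort : HasWalkLen A 1 v u₂ := hwl_concat (hwl_zero.mpr rfl) hAvu₂
      have := geo_len_s16 hgeo wlong wshort (by omega) (by omega)
      omega
    obtain ⟨s, rfl⟩ : ∃ s, m = s + 1 := ⟨m - 1, by omega⟩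
    obtain ⟨a, hua, ha⟩ := hwl_succ.mp hw
    have haN : a ∈ Nplus A u := hua
    rw [hu] at haN
    rcases haN with h | h
    · rw [h] at ha
      have hlong : HasWalkLen A (k - 1 + 1) u₁ w' := hwl_concat hz hzw
      have := geo_len_s16 hgeo hlong ha (by omega) (by omega)
      omega
    · rw [h] at ha
      have hvw : HasWalkLen A (d + 1) v₁ w' := hwl_concat hdz hzw
      have := geo_snd hgeo hAvu₂ hAvv₁ ha hvw (by omega) (by omega)
      exact hv2 this.symm
  have hv₁O : ¬ DistLe A k u v₁ :=
    out_lemma hk hgeo hdeg hcard huv h12 hv2 h11 hu hv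
  have hne : ∀ w' : V, A z w' → w' ≠ v₁ := by
    intro w' hzw heq
    rw [heq] at hzw
    have hc : HasWalkLen A (d + 1) v₁ v₁ := hwl_concat hdz hzw
    have := geo_len_s16 hgeo hc (hwl_zero.mpr rfl) (by omega) (by omega)
    omega
  obtain ⟨a, b, hab, hOeq⟩ := Set.ncard_eq_two.mp (ncard_O hgeo hdeg hcard u)
  have e1 : z₁ = a ∨ z₁ = b := by
    have : z₁ ∈ {y : V | ¬ DistLe A k u y} := hO z₁ hAz₁
    rw [hOeq] at this; exact this
  have e2 : z₂ = a ∨ z₂ = b := by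
    have : z₂ ∈ {y : V | ¬ DistLe A k u y} := hO z₂ hAz₂
    rw [hOeq] at this; exact this
  have e3 : v₁ = a ∨ v₁ = b := by
    have : v₁ ∈ {y : V | ¬ DistLe A k u y} := hv₁O
    rw [hOeq] at this; exact this
  have n1 : z₁ ≠ v₁ := hne z₁ hAz₁
  have n2 : z₂ ≠ v₁ := hne z₂ hAz₂
  rcases e1 with rfl | rfl <;> rcases e2 with h2 | h2 <;> rcases e3 with h3 | h3 <;>
    simp_all

end key

/-- In a diregular `(2,k,+2)`-digraph with `k ≥ 3` and `u, v` having unique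
common out-neighbour `u₂`: `T_{k−3}(v₁) ∩ N^{k−1}(u₁) = ∅` and
`T_{k−3}(u₁) ∩ N^{k−1}(v₁) = ∅`. -/
theorem stmt_16 {V : Type*} [Fintype V] (A : V → V → Prop) (k : ℕ) (hk : 3 ≤ k)
    (hgeo : Geodetic A k)
    (hdeg : ∀ w, outDeg A w = 2 ∧ inDeg A w = 2)
    (hcard : Fintype.card V = 2 ^ (k + 1) + 1)
    (u v u₁ u₂ v₁ : V) (huv : u ≠ v)
    (h12 : u₁ ≠ u₂) (hv2 : v₁ ≠ u₂) (h11 : u₁ ≠ v₁)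
    (hu : Nplus A u = {u₁, u₂}) (hv : Nplus A v = {v₁, u₂}) :
    Tset A (k - 3) v₁ ∩ {w | DistEq A (k - 1) u₁ w} = ∅ ∧
    Tset A (k - 3) u₁ ∩ {w | DistEq A (k - 1) v₁ w} = ∅ := by
  have hout : ∀ w : V, outDeg A w = 2 := fun w => (hdeg w).1
  exact ⟨key_lemma hk hgeo hout hcard huv h12 hv2 h11 hu hv,
    key_lemma hk hgeo hout hcard huv.symm hv2 h12 h11.symm hv hu⟩
end
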